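/- Let G_{1/2}(x) = (2π)^{−3/2} e^{−|x|²/2} be the Gaussian heat kernel at time 1/2 on ℝ³, and let f(x) = 1/|x|. Then the convolution F̄ = G_{1/2} ∗ f satisfies the decay estimate |F̄(x)| ≤ C(1+|x|)^{−1} for all x ∈ ℝ³, for some constant C > 0 independent of x. -/

import Mathlib

open MeasureTheory

/-- ℝ³ as a Euclidean space. -/
abbrev E3 := EuclideanSpace ℝ (Fin 3)

/-- The Gaussian heat kernel at time 1/2 on ℝ³. -/
noncomputable def Ghalf (x : E3) : ℝ :=
  (2 * Real.pi) ^ (-(3 : ℝ) / 2) * Real.exp (-‖x‖ ^ 2 / 2)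

/-- The mollified Newtonian potential `F̄ = G_{1/2} ∗ (1/|·|)`. -/
noncomputable def Fbar (x : E3) : ℝ := ∫ y : E3, Ghalf (x - y) * ‖y‖⁻¹

open Real Set Metric

noncomputable def g1 (s : ℝ) : ℝ := |s| ^ (-(1/3) : ℝ) * rexp (-s ^ 2 / 4)

lemma g1_nonneg (s : ℝ) : 0 ≤ g1 s := by
  unfold g1; positivity

lemma abs_rpow_le (s : ℝ) : |s| ^ (-(1/3) : ℝ) ≤ 2 * |s ^ (-(1/3) : ℝ)| := by
  rcases lt_trichotomy s 0 with h | h | h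
  · have h1 : s ^ (-(1/3) : ℝ) = rexp (Real.log s * (-(1/3))) * Real.cos ((-(1/3)) * π) :=
      Real.rpow_def_of_neg h _
    have h2 : Real.cos ((-(1/3)) * π) = 1/2 := by
      rw [show ((-(1/3)) * π : ℝ) = -(π/3) by ring, Real.cos_neg, Real.cos_pi_div_three]
    have h3 : |s| ^ (-(1/3) : ℝ) = rexp (Real.log |s| * (-(1/3))) :=
      Real.rpow_def_of_pos (abs_pos.mpr h.ne) _
    rw [h1, h2, h3, Real.log_abs]
    rw [abs_of_pos (by positivity)]
    ring_nf
    nlinarith [Real.exp_pos (Real.log s * (-(1/3)))]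
  · simp [h, Real.zero_rpow (by norm_num : (-(1/3) : ℝ) ≠ 0)]
  · rw [abs_of_pos h, abs_of_nonneg (Real.rpow_nonneg h.le _)]
    nlinarith [Real.rpow_nonneg h.le (-(1/3) : ℝ)]

lemma g1_measurable : Measurable g1 :=
  (measurable_id.abs.pow_const _).mul (by fun_prop)

lemma integrable_g1 : Integrable g1 := by
  have hmeas : AEStronglyMeasurable g1 volume := g1_measurable.aestronglyMeasurable
  rw [← integrableOn_univ, ← Set.union_compl_self (Ioc (-1:ℝ) 1)]
  apply IntegrableOn.union
  · have hint : IntegrableOn (fun s : ℝ => 2 * s ^ (-(1/3) : ℝ)) (Ioc (-1:ℝ) 1) := by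
      have h := intervalIntegral.intervalIntegrable_rpow' (a := (-1:ℝ)) (b := 1)
        (by norm_num : (-1 : ℝ) < -(1/3))
      rw [intervalIntegrable_iff] at h
      have : Set.uIoc (-1:ℝ) 1 = Ioc (-1:ℝ) 1 := by
        rw [Set.uIoc_of_le (by norm_num : (-1:ℝ) ≤ 1)]
      rw [this] at h
      exact h.const_mul 2
    apply Integrable.mono hint hmeas.restrict
    filter_upwards with s
    rw [Real.norm_eq_abs, Real.norm_eq_abs, abs_of_nonneg (g1_nonneg s), abs_mul]
    calc g1 s ≤ |s| ^ (-(1/3) : ℝ) * 1 := by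
          unfold g1
          apply mul_le_mul_of_nonneg_left _ (Real.rpow_nonneg (abs_nonneg s) _)
          exact Real.exp_le_one_iff.mpr (by nlinarith [sq_nonneg s])
      _ = |s| ^ (-(1/3) : ℝ) := mul_one _
      _ ≤ 2 * |s ^ (-(1/3) : ℝ)| := abs_rpow_le s
      _ = |(2:ℝ)| * |s ^ (-(1/3) : ℝ)| := by norm_num
  · have hgauss : Integrable (fun s : ℝ => rexp (-s ^ 2 / 4)) := by
      have h := integrable_exp_neg_mul_sq (by norm_num : (0:ℝ) < 1/4)
      convert h using 2 with s
      ring_nf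
    apply Integrable.mono hgauss.integrableOn hmeas.restrict
    filter_upwards [ae_restrict_mem (measurableSet_Ioc.compl)] with s hs
    rw [Real.norm_eq_abs, Real.norm_eq_abs, abs_of_nonneg (g1_nonneg s),
      abs_of_nonneg (Real.exp_nonneg _)]
    have hs' : 1 ≤ |s| := by
      simp only [mem_compl_iff, mem_Ioc, not_and_or, not_lt, not_le] at hs
      rcases hs with h | h
      · rw [abs_of_nonpos (by linarith)]; linarith
      · rw [abs_of_pos (by linarith)]; linarith
    calc g1 s ≤ 1 * rexp (-s ^ 2 / 4) := by
          unfold g1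
          apply mul_le_mul_of_nonneg_right _ (Real.exp_nonneg _)
          exact Real.rpow_le_one_of_one_le_of_nonpos hs' (by norm_num)
      _ = rexp (-s ^ 2 / 4) := one_mul _



lemma key_ineq (v : Fin 3 → ℝ) (hv : ∀ i, v i ≠ 0) :
    (Real.sqrt (∑ i, v i ^ 2))⁻¹ * rexp (-(∑ i, v i ^ 2) / 4) ≤ ∏ i, g1 (v i) := by
  have hsum : ∑ i, v i ^ 2 = v 0 ^ 2 + v 1 ^ 2 + v 2 ^ 2 := Fin.sum_univ_three _
  have hprod : ∏ i, g1 (v i) = g1 (v 0) * g1 (v 1) * g1 (v 2) := Fin.prod_univ_three _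
  rw [hsum, hprod]
  set a := v 0; set b := v 1; set c := v 2
  have ha : 0 < |a| := abs_pos.mpr (hv 0)
  have hb : 0 < |b| := abs_pos.mpr (hv 1)
  have hc : 0 < |c| := abs_pos.mpr (hv 2)
  set N := Real.sqrt (a ^ 2 + b ^ 2 + c ^ 2) with hN
  have hNa : |a| ≤ N := by
    rw [← Real.sqrt_sq_eq_abs]; exact Real.sqrt_le_sqrt (by nlinarith [sq_nonneg b, sq_nonneg c])
  have hNb : |b| ≤ N := by
    rw [← Real.sqrt_sq_eq_abs]; exact Real.sqrt_le_sqrt (by nlinarith [sq_nonneg a, sq_nonneg c])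
  have hNc : |c| ≤ N := by
    rw [← Real.sqrt_sq_eq_abs]; exact Real.sqrt_le_sqrt (by nlinarith [sq_nonneg a, sq_nonneg b])
  have hNpos : 0 < N := lt_of_lt_of_le ha hNa
  have hP : |a| * |b| * |c| ≤ N ^ 3 := by
    calc |a| * |b| * |c| ≤ N * N * N :=
          mul_le_mul (mul_le_mul hNa hNb hb.le hNpos.le) hNc hc.le (by positivity)
      _ = N ^ 3 := by ring
  -- N⁻¹ ≤ (|a||b||c|)^(-1/3)
  have h13 : (|a| * |b| * |c|) ^ ((1:ℝ)/3) ≤ N := by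
    have h1 : (|a| * |b| * |c|) ^ ((1:ℝ)/3) ≤ (N ^ 3) ^ ((1:ℝ)/3) :=
      Real.rpow_le_rpow (by positivity) hP (by norm_num)
    calc (|a| * |b| * |c|) ^ ((1:ℝ)/3) ≤ (N ^ 3) ^ ((1:ℝ)/3) := h1
      _ = N := by
          rw [← Real.rpow_natCast N 3, ← Real.rpow_mul hNpos.le]
          norm_num
  have hinv : N⁻¹ ≤ (|a| * |b| * |c|) ^ (-(1/3) : ℝ) := by
    rw [show (-(1/3) : ℝ) = -(1/3 : ℝ) by norm_num, Real.rpow_neg (by positivity)]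
    exact inv_anti₀ (by positivity) h13
  have hsplit : (|a| * |b| * |c|) ^ (-(1/3) : ℝ)
      = |a| ^ (-(1/3) : ℝ) * |b| ^ (-(1/3) : ℝ) * |c| ^ (-(1/3) : ℝ) := by
    rw [Real.mul_rpow (by positivity) (abs_nonneg c), Real.mul_rpow (abs_nonneg a) (abs_nonneg b)]
  have hexp : rexp (-(a ^ 2 + b ^ 2 + c ^ 2) / 4)
      = rexp (-a ^ 2 / 4) * rexp (-b ^ 2 / 4) * rexp (-c ^ 2 / 4) := by
    rw [← Real.exp_add, ← Real.exp_add]; ring_nf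
  rw [hexp]
  unfold g1
  calc N⁻¹ * (rexp (-a ^ 2 / 4) * rexp (-b ^ 2 / 4) * rexp (-c ^ 2 / 4))
      ≤ (|a| ^ (-(1/3) : ℝ) * |b| ^ (-(1/3) : ℝ) * |c| ^ (-(1/3) : ℝ)) *
        (rexp (-a ^ 2 / 4) * rexp (-b ^ 2 / 4) * rexp (-c ^ 2 / 4)) := by
        apply mul_le_mul_of_nonneg_right _ (by positivity)
        rw [← hsplit]; exact hinv
    _ = |a| ^ (-(1/3) : ℝ) * rexp (-a ^ 2 / 4) * (|b| ^ (-(1/3) : ℝ) * rexp (-b ^ 2 / 4)) *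
        (|c| ^ (-(1/3) : ℝ) * rexp (-c ^ 2 / 4)) := by ring

lemma integrable_inv_norm_gauss : Integrable (fun y : E3 => ‖y‖⁻¹ * rexp (-‖y‖ ^ 2 / 4)) := by
  rw [← ((EuclideanSpace.volume_preserving_symm_measurableEquiv_toLp (Fin 3)).symm).integrable_comp_emb
    (MeasurableEquiv.measurableEmbedding _)]
  have hprod : Integrable (fun v : Fin 3 → ℝ => ∏ i, g1 (v i)) :=
    Integrable.fintype_prod (fun _ => integrable_g1)
  have hnorm : ∀ v : Fin 3 → ℝ,
      ‖(MeasurableEquiv.toLp 2 (Fin 3 → ℝ)).symm.symm v‖ = Real.sqrt (∑ i, v i ^ 2) := by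
    intro v
    simp [EuclideanSpace.norm_eq, Real.norm_eq_abs, sq_abs]
  have h0 : ∀ᵐ v : Fin 3 → ℝ, ∀ i, v i ≠ 0 := by
    rw [ae_all_iff]
    intro i
    rw [MeasureTheory.volume_pi]
    exact MeasureTheory.Measure.ae_eval_ne _ i 0
  apply Integrable.mono hprod
  · apply Measurable.aestronglyMeasurable
    apply Measurable.mul
    · apply Measurable.inv
      exact (measurable_norm.comp (MeasurableEquiv.measurable _))
    · fun_prop
  · filter_upwards [h0] with v hv
    simp only [Function.comp_apply, hnorm v]
    rw [Real.norm_eq_abs, Real.norm_eq_abs]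
    have h1 : 0 ≤ (Real.sqrt (∑ i, v i ^ 2))⁻¹ * rexp (-(∑ i, v i ^ 2) / 4) := by positivity
    have h2 : 0 ≤ ∏ i, g1 (v i) := Finset.prod_nonneg fun i _ => g1_nonneg _
    rw [show Real.sqrt (∑ i, v i ^ 2) ^ 2 = ∑ i, v i ^ 2 from
      Real.sq_sqrt (Finset.sum_nonneg fun i _ => sq_nonneg _)]
    rw [abs_of_nonneg h1, abs_of_nonneg h2]
    exact key_ineq v hv


lemma integrable_gaussE3 {b : ℝ} (hb : 0 < b) : Integrable (fun y : E3 => rexp (-b * ‖y‖ ^ 2)) := by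
  have h := (GaussianFourier.integrable_cexp_neg_mul_sq_norm_add (V := E3)
    (b := (b : ℂ)) (by simpa using hb) 0 0).norm
  apply h.congr
  filter_upwards with y
  rw [Complex.norm_exp]
  congr 1
  rw [show (-(b:ℂ) * (‖y‖:ℂ) ^ 2 + 0 * ((inner ℝ (0:E3) y : ℝ) : ℂ)) = (((-b * ‖y‖ ^ 2 : ℝ)) : ℂ) by
    push_cast; ring]
  exact Complex.ofReal_re _

lemma gauss_quarter : Integrable (fun y : E3 => rexp (-‖y‖ ^ 2 / 4)) := by
  have h := integrable_gaussE3 (b := 1/4) (by norm_num)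
  apply h.congr
  filter_upwards with y
  ring_nf

lemma gauss_half : Integrable (fun y : E3 => rexp (-‖y‖ ^ 2 / 2)) := by
  have h := integrable_gaussE3 (b := 1/2) (by norm_num)
  apply h.congr
  filter_upwards with y
  ring_nf

/-- The function `w ↦ ‖w‖⁻¹ exp(-‖x-w‖²/4)` is integrable. -/
lemma integrable_phi (x : E3) :
    Integrable (fun w : E3 => ‖w‖⁻¹ * rexp (-‖x - w‖ ^ 2 / 4)) := by
  have hmeas : AEStronglyMeasurable (fun w : E3 => ‖w‖⁻¹ * rexp (-‖x - w‖ ^ 2 / 4)) volume := by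
    apply Measurable.aestronglyMeasurable
    exact (measurable_norm.inv).mul (by fun_prop)
  rw [← integrableOn_univ, ← Set.union_compl_self (ball (0:E3) 1)]
  apply IntegrableOn.union
  · apply Integrable.mono ((integrable_inv_norm_gauss.const_mul (rexp (1/4))).integrableOn
      (s := ball (0:E3) 1)) hmeas.restrict
    filter_upwards [ae_restrict_mem measurableSet_ball] with w hw
    rw [mem_ball, dist_zero_right] at hw
    rw [Real.norm_eq_abs, Real.norm_eq_abs, abs_of_nonneg (by positivity),
      abs_of_nonneg (by positivity)]
    have h1 : rexp (-‖x - w‖ ^ 2 / 4) ≤ 1 := Real.exp_le_one_iff.mpr (by nlinarith [sq_nonneg ‖x - w‖])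
    have h2 : (1:ℝ) ≤ rexp (1/4) * rexp (-‖w‖ ^ 2 / 4) := by
      rw [← Real.exp_add]
      apply Real.one_le_exp
      nlinarith [norm_nonneg w]
    calc ‖w‖⁻¹ * rexp (-‖x - w‖ ^ 2 / 4) ≤ ‖w‖⁻¹ * 1 :=
          mul_le_mul_of_nonneg_left h1 (by positivity)
      _ = ‖w‖⁻¹ := mul_one _
      _ ≤ ‖w‖⁻¹ * (rexp (1/4) * rexp (-‖w‖ ^ 2 / 4)) := by
          nlinarith [inv_nonneg.mpr (norm_nonneg w)]
      _ = rexp (1/4) * (‖w‖⁻¹ * rexp (-‖w‖ ^ 2 / 4)) := by ring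
  · have hg : Integrable (fun w : E3 => rexp (-‖x - w‖ ^ 2 / 4)) := gauss_quarter.comp_sub_left x
    apply Integrable.mono hg.integrableOn hmeas.restrict
    filter_upwards [ae_restrict_mem measurableSet_ball.compl] with w hw
    rw [mem_compl_iff, mem_ball, dist_zero_right, not_lt] at hw
    rw [Real.norm_eq_abs, Real.norm_eq_abs, abs_of_nonneg (by positivity),
      abs_of_nonneg (by positivity)]
    have : ‖w‖⁻¹ ≤ 1 := inv_le_one_of_one_le₀ hw
    nlinarith [Real.exp_nonneg (-‖x - w‖ ^ 2 / 4)]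

/-- Shifted integrability. -/
lemma integrable_shift (x : E3) :
    Integrable (fun z : E3 => rexp (-‖z‖ ^ 2 / 4) * ‖x - z‖⁻¹) := by
  have h := (integrable_phi x).comp_sub_left x
  apply h.congr
  filter_upwards with z
  rw [sub_sub_cancel]
  ring


noncomputable def M1 : ℝ := ∫ w : E3, ‖w‖⁻¹ * rexp (-‖w‖ ^ 2 / 4)
noncomputable def M2 : ℝ := ∫ w : E3, rexp (-‖w‖ ^ 2 / 4)
noncomputable def M3 : ℝ := ∫ w : E3, rexp (-‖w‖ ^ 2 / 2)
noncomputable def M : ℝ := rexp (1/4) * M1 + M2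

lemma M1_nonneg : 0 ≤ M1 := integral_nonneg fun w => by positivity
lemma M2_nonneg : 0 ≤ M2 := integral_nonneg fun w => by positivity
lemma M3_nonneg : 0 ≤ M3 := integral_nonneg fun w => by positivity
lemma M_nonneg : 0 ≤ M := by
  have := M1_nonneg; have := M2_nonneg
  unfold M; nlinarith [Real.exp_nonneg (1/4 : ℝ)]

lemma bound_shift (x : E3) : ∫ z : E3, rexp (-‖z‖ ^ 2 / 4) * ‖x - z‖⁻¹ ≤ M := by
  have hchange : ∫ z : E3, rexp (-‖z‖ ^ 2 / 4) * ‖x - z‖⁻¹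
      = ∫ w : E3, ‖w‖⁻¹ * rexp (-‖x - w‖ ^ 2 / 4) := by
    rw [← integral_sub_left_eq_self (fun w : E3 => ‖w‖⁻¹ * rexp (-‖x - w‖ ^ 2 / 4)) volume x]
    congr 1 with z
    rw [sub_sub_cancel]
    ring
  rw [hchange, ← integral_add_compl (measurableSet_ball (x := (0:E3)) (ε := 1))
    (integrable_phi x)]
  have hb1 : ∫ w in ball (0:E3) 1, ‖w‖⁻¹ * rexp (-‖x - w‖ ^ 2 / 4) ≤ rexp (1/4) * M1 := by
    have hD : Integrable (fun w : E3 => rexp (1/4) * (‖w‖⁻¹ * rexp (-‖w‖ ^ 2 / 4))) :=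
      integrable_inv_norm_gauss.const_mul _
    calc ∫ w in ball (0:E3) 1, ‖w‖⁻¹ * rexp (-‖x - w‖ ^ 2 / 4)
        ≤ ∫ w in ball (0:E3) 1, rexp (1/4) * (‖w‖⁻¹ * rexp (-‖w‖ ^ 2 / 4)) := by
          apply setIntegral_mono_on ((integrable_phi x).integrableOn) hD.integrableOn
            measurableSet_ball
          intro w hw
          rw [mem_ball, dist_zero_right] at hw
          have h1 : rexp (-‖x - w‖ ^ 2 / 4) ≤ 1 :=
            Real.exp_le_one_iff.mpr (by nlinarith [sq_nonneg ‖x - w‖])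
          have h2 : (1:ℝ) ≤ rexp (1/4) * rexp (-‖w‖ ^ 2 / 4) := by
            rw [← Real.exp_add]
            apply Real.one_le_exp
            nlinarith [norm_nonneg w]
          have h3 : (0:ℝ) ≤ ‖w‖⁻¹ := by positivity
          calc ‖w‖⁻¹ * rexp (-‖x - w‖ ^ 2 / 4) ≤ ‖w‖⁻¹ * 1 :=
                mul_le_mul_of_nonneg_left h1 h3
            _ ≤ ‖w‖⁻¹ * (rexp (1/4) * rexp (-‖w‖ ^ 2 / 4)) := by nlinarith
            _ = rexp (1/4) * (‖w‖⁻¹ * rexp (-‖w‖ ^ 2 / 4)) := by ring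
      _ ≤ ∫ w : E3, rexp (1/4) * (‖w‖⁻¹ * rexp (-‖w‖ ^ 2 / 4)) := by
          apply setIntegral_le_integral hD
          filter_upwards with w
          positivity
      _ = rexp (1/4) * M1 := by rw [integral_const_mul]; rfl
  have hb2 : ∫ w in (ball (0:E3) 1)ᶜ, ‖w‖⁻¹ * rexp (-‖x - w‖ ^ 2 / 4) ≤ M2 := by
    have hG : Integrable (fun w : E3 => rexp (-‖x - w‖ ^ 2 / 4)) := gauss_quarter.comp_sub_left x
    calc ∫ w in (ball (0:E3) 1)ᶜ, ‖w‖⁻¹ * rexp (-‖x - w‖ ^ 2 / 4)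
        ≤ ∫ w in (ball (0:E3) 1)ᶜ, rexp (-‖x - w‖ ^ 2 / 4) := by
          apply setIntegral_mono_on ((integrable_phi x).integrableOn) hG.integrableOn
            measurableSet_ball.compl
          intro w hw
          rw [mem_compl_iff, mem_ball, dist_zero_right, not_lt] at hw
          have : ‖w‖⁻¹ ≤ 1 := inv_le_one_of_one_le₀ hw
          nlinarith [Real.exp_nonneg (-‖x - w‖ ^ 2 / 4)]
      _ ≤ ∫ w : E3, rexp (-‖x - w‖ ^ 2 / 4) := by
          apply setIntegral_le_integral hG
          filter_upwards with w
          positivity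
      _ = M2 := integral_sub_left_eq_self (fun w : E3 => rexp (-‖w‖ ^ 2 / 4)) volume x
  unfold M
  linarith



noncomputable def Khalf (x : E3) : ℝ := ∫ z : E3, rexp (-‖z‖ ^ 2 / 2) * ‖x - z‖⁻¹

lemma integrable_half_shift (x : E3) :
    Integrable (fun z : E3 => rexp (-‖z‖ ^ 2 / 2) * ‖x - z‖⁻¹) := by
  apply Integrable.mono (integrable_shift x)
  · exact (((by fun_prop : Measurable fun z : E3 => rexp (-‖z‖ ^ 2 / 2))).mul
      ((measurable_const.sub measurable_id).norm.inv)).aestronglyMeasurable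
  · filter_upwards with z
    rw [Real.norm_eq_abs, Real.norm_eq_abs, abs_of_nonneg (by positivity),
      abs_of_nonneg (by positivity)]
    have h1 : rexp (-‖z‖ ^ 2 / 2) ≤ rexp (-‖z‖ ^ 2 / 4) :=
      Real.exp_le_exp.mpr (by nlinarith [sq_nonneg ‖z‖])
    have h2 : (0:ℝ) ≤ ‖x - z‖⁻¹ := by positivity
    exact mul_le_mul_of_nonneg_right h1 h2

lemma Khalf_nonneg (x : E3) : 0 ≤ Khalf x :=
  integral_nonneg fun z => by positivity

lemma Khalf_le_M (x : E3) : Khalf x ≤ M := by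
  refine le_trans ?_ (bound_shift x)
  apply integral_mono (integrable_half_shift x) (integrable_shift x)
  intro z
  have h1 : rexp (-‖z‖ ^ 2 / 2) ≤ rexp (-‖z‖ ^ 2 / 4) :=
    Real.exp_le_exp.mpr (by nlinarith [sq_nonneg ‖z‖])
  have h2 : (0:ℝ) ≤ ‖x - z‖⁻¹ := by positivity
  exact mul_le_mul_of_nonneg_right h1 h2

lemma Khalf_decay (x : E3) (hx : 1 ≤ ‖x‖) : Khalf x ≤ (2 * M3 + 16 * M) / ‖x‖ := by
  have hxpos : (0:ℝ) < ‖x‖ := by linarith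
  set s : Set E3 := ball (0:E3) (‖x‖ / 2) with hs
  have hsm : MeasurableSet s := measurableSet_ball
  rw [show Khalf x = (∫ z in s, rexp (-‖z‖ ^ 2 / 2) * ‖x - z‖⁻¹) +
      ∫ z in sᶜ, rexp (-‖z‖ ^ 2 / 2) * ‖x - z‖⁻¹ from
    (integral_add_compl hsm (integrable_half_shift x)).symm]
  have hb1 : ∫ z in s, rexp (-‖z‖ ^ 2 / 2) * ‖x - z‖⁻¹ ≤ 2 * M3 / ‖x‖ := by
    have hD : Integrable (fun z : E3 => rexp (-‖z‖ ^ 2 / 2) * (2 / ‖x‖)) :=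
      gauss_half.mul_const _
    calc ∫ z in s, rexp (-‖z‖ ^ 2 / 2) * ‖x - z‖⁻¹
        ≤ ∫ z in s, rexp (-‖z‖ ^ 2 / 2) * (2 / ‖x‖) := by
          apply setIntegral_mono_on ((integrable_half_shift x).integrableOn) hD.integrableOn hsm
          intro z hz
          rw [hs, mem_ball, dist_zero_right] at hz
          have hxz : ‖x‖ / 2 ≤ ‖x - z‖ := by
            have := norm_sub_norm_le x z
            linarith [norm_sub_norm_le x z]
          have h2 : ‖x - z‖⁻¹ ≤ 2 / ‖x‖ := by
            rw [div_eq_mul_inv]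
            have h0 : (0:ℝ) < ‖x‖ / 2 := by positivity
            calc ‖x - z‖⁻¹ ≤ (‖x‖ / 2)⁻¹ := by
                  apply inv_anti₀ h0 hxz
              _ = 2 * ‖x‖⁻¹ := by rw [div_eq_mul_inv]; rw [mul_inv, inv_inv]; ring
          exact mul_le_mul_of_nonneg_left h2 (Real.exp_nonneg _)
      _ ≤ ∫ z : E3, rexp (-‖z‖ ^ 2 / 2) * (2 / ‖x‖) := by
          apply setIntegral_le_integral hD
          filter_upwards with z
          positivity
      _ = M3 * (2 / ‖x‖) := by rw [integral_mul_const]; rfl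
      _ = 2 * M3 / ‖x‖ := by ring
  have hb2 : ∫ z in sᶜ, rexp (-‖z‖ ^ 2 / 2) * ‖x - z‖⁻¹ ≤ 16 * M / ‖x‖ := by
    have hD : Integrable (fun z : E3 =>
        rexp (-‖x‖ ^ 2 / 16) * (rexp (-‖z‖ ^ 2 / 4) * ‖x - z‖⁻¹)) :=
      (integrable_shift x).const_mul _
    have hexp : rexp (-‖x‖ ^ 2 / 16) ≤ 16 / ‖x‖ ^ 2 := by
      have ht : (0:ℝ) < ‖x‖ ^ 2 / 16 := by positivity
      have h1 : ‖x‖ ^ 2 / 16 ≤ rexp (‖x‖ ^ 2 / 16) := by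
        linarith [Real.add_one_le_exp (‖x‖ ^ 2 / 16)]
      rw [show (-‖x‖ ^ 2 / 16 : ℝ) = -(‖x‖ ^ 2 / 16) by ring, Real.exp_neg]
      rw [show (16 / ‖x‖ ^ 2 : ℝ) = (‖x‖ ^ 2 / 16)⁻¹ by field_simp]
      exact inv_anti₀ ht h1
    calc ∫ z in sᶜ, rexp (-‖z‖ ^ 2 / 2) * ‖x - z‖⁻¹
        ≤ ∫ z in sᶜ, rexp (-‖x‖ ^ 2 / 16) * (rexp (-‖z‖ ^ 2 / 4) * ‖x - z‖⁻¹) := by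
          apply setIntegral_mono_on ((integrable_half_shift x).integrableOn) hD.integrableOn
            hsm.compl
          intro z hz
          rw [hs, mem_compl_iff, mem_ball, dist_zero_right, not_lt] at hz
          have hz2 : ‖x‖ ^ 2 / 4 ≤ ‖z‖ ^ 2 := by nlinarith [norm_nonneg z, norm_nonneg x]
          have h1 : rexp (-‖z‖ ^ 2 / 2) ≤ rexp (-‖x‖ ^ 2 / 16) * rexp (-‖z‖ ^ 2 / 4) := by
            rw [← Real.exp_add]
            apply Real.exp_le_exp.mpr
            nlinarith
          have h2 : (0:ℝ) ≤ ‖x - z‖⁻¹ := by positivity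
          calc rexp (-‖z‖ ^ 2 / 2) * ‖x - z‖⁻¹
              ≤ (rexp (-‖x‖ ^ 2 / 16) * rexp (-‖z‖ ^ 2 / 4)) * ‖x - z‖⁻¹ :=
                mul_le_mul_of_nonneg_right h1 h2
            _ = rexp (-‖x‖ ^ 2 / 16) * (rexp (-‖z‖ ^ 2 / 4) * ‖x - z‖⁻¹) := by ring
      _ ≤ ∫ z : E3, rexp (-‖x‖ ^ 2 / 16) * (rexp (-‖z‖ ^ 2 / 4) * ‖x - z‖⁻¹) := by
          apply setIntegral_le_integral hD
          filter_upwards with z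
          positivity
      _ = rexp (-‖x‖ ^ 2 / 16) * ∫ z : E3, rexp (-‖z‖ ^ 2 / 4) * ‖x - z‖⁻¹ :=
          integral_const_mul _ _
      _ ≤ (16 / ‖x‖ ^ 2) * M := by
          apply mul_le_mul hexp (bound_shift x) ?_ (by positivity)
          exact integral_nonneg fun z => by positivity
      _ = M * 16 / ‖x‖ ^ 2 := by ring
      _ ≤ M * 16 / ‖x‖ := by
          apply div_le_div_of_nonneg_left (by nlinarith [M_nonneg]) hxpos (by nlinarith)
      _ = 16 * M / ‖x‖ := by ring
  have hsum : 2 * M3 / ‖x‖ + 16 * M / ‖x‖ = (2 * M3 + 16 * M) / ‖x‖ := by ring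
  linarith


lemma Fbar_eq (x : E3) : Fbar x = (2 * Real.pi) ^ (-(3 : ℝ) / 2) * Khalf x := by
  unfold Fbar Khalf
  rw [← integral_const_mul]
  have hchange : ∫ z : E3, (2 * Real.pi) ^ (-(3 : ℝ) / 2) * (rexp (-‖z‖ ^ 2 / 2) * ‖x - z‖⁻¹)
      = ∫ y : E3, (2 * Real.pi) ^ (-(3 : ℝ) / 2) * (rexp (-‖x - y‖ ^ 2 / 2) * ‖y‖⁻¹) := by
    rw [← integral_sub_left_eq_self
      (fun z : E3 => (2 * Real.pi) ^ (-(3 : ℝ) / 2) * (rexp (-‖z‖ ^ 2 / 2) * ‖x - z‖⁻¹)) volume x]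
    congr 1 with y
    rw [sub_sub_cancel]
  rw [hchange]
  congr 1 with y
  unfold Ghalf
  ring

/-- Decay estimate: `|F̄(x)| ≤ C (1+|x|)⁻¹` for all `x ∈ ℝ³`. -/
theorem Fbar_decay : ∃ C : ℝ, 0 < C ∧ ∀ x : E3, |Fbar x| ≤ C * (1 + ‖x‖)⁻¹ := by
  set c : ℝ := (2 * Real.pi) ^ (-(3 : ℝ) / 2) with hc
  have hcpos : 0 < c := Real.rpow_pos_of_pos (by positivity) _
  have hnn : (0:ℝ) ≤ 2 * M + 2 * (2 * M3 + 16 * M) := by nlinarith [M_nonneg, M3_nonneg]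
  have hnn2 : (0:ℝ) ≤ 2 * M3 + 16 * M := by nlinarith [M_nonneg, M3_nonneg]
  have hCpos : (0:ℝ) < c * (2 * M + 2 * (2 * M3 + 16 * M)) + 1 := by
    nlinarith [mul_nonneg hcpos.le hnn]
  refine ⟨c * (2 * M + 2 * (2 * M3 + 16 * M)) + 1, hCpos, fun x => ?_⟩
  have hx0 : (0:ℝ) ≤ ‖x‖ := norm_nonneg x
  have h1x : (0:ℝ) < 1 + ‖x‖ := by linarith
  have habs : |Fbar x| = c * Khalf x := by
    rw [Fbar_eq x, ← hc, abs_of_nonneg (mul_nonneg hcpos.le (Khalf_nonneg x))]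
  rw [habs]
  rcases le_or_gt ‖x‖ 1 with h | h
  · -- small x
    have h2 : (1 + ‖x‖)⁻¹ ≥ (2:ℝ)⁻¹ := by
      apply inv_anti₀ h1x (by linarith) |>.trans_eq rfl
    have hK : Khalf x ≤ M := Khalf_le_M x
    calc c * Khalf x ≤ c * M := mul_le_mul_of_nonneg_left hK hcpos.le
      _ ≤ (c * (2 * M + 2 * (2 * M3 + 16 * M)) + 1) * (2:ℝ)⁻¹ := by
          nlinarith [M_nonneg, M3_nonneg, hcpos.le, mul_nonneg hcpos.le M_nonneg,
            mul_nonneg hcpos.le M3_nonneg]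
      _ ≤ (c * (2 * M + 2 * (2 * M3 + 16 * M)) + 1) * (1 + ‖x‖)⁻¹ :=
          mul_le_mul_of_nonneg_left h2 hCpos.le
  · -- large x
    have hx1 : (1:ℝ) ≤ ‖x‖ := h.le
    have hK : Khalf x ≤ (2 * M3 + 16 * M) / ‖x‖ := Khalf_decay x hx1
    have h2 : (‖x‖:ℝ)⁻¹ ≤ 2 * (1 + ‖x‖)⁻¹ := by
      rw [show (‖x‖:ℝ)⁻¹ = 1 / ‖x‖ by rw [one_div],
        show (2:ℝ) * (1 + ‖x‖)⁻¹ = 2 / (1 + ‖x‖) by rw [div_eq_mul_inv],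
        div_le_div_iff₀ (by linarith) h1x]
      linarith
    calc c * Khalf x ≤ c * ((2 * M3 + 16 * M) / ‖x‖) :=
          mul_le_mul_of_nonneg_left hK hcpos.le
      _ = (c * (2 * M3 + 16 * M)) * ‖x‖⁻¹ := by ring
      _ ≤ (c * (2 * M3 + 16 * M)) * (2 * (1 + ‖x‖)⁻¹) := by
          exact mul_le_mul_of_nonneg_left h2 (mul_nonneg hcpos.le hnn2)
      _ = (c * (2 * (2 * M3 + 16 * M))) * (1 + ‖x‖)⁻¹ := by ring
      _ ≤ (c * (2 * M + 2 * (2 * M3 + 16 * M)) + 1) * (1 + ‖x‖)⁻¹ := by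
          apply mul_le_mul_of_nonneg_right ?_ (by positivity)
          nlinarith [mul_nonneg hcpos.le M_nonneg]
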